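/- arXiv:1812.11155 — 3 statements merged into one kernel-verified Lean document; each statement's English description precedes it below -/
import Mathlib

section
/- If W' ∈ ℝ² satisfies the first two equations of the DEC anisotropic flux system, namely W'·w₁ = λ₁(f₃−f₂) + μ₁(f₁−f₃) and W'·w₂ = λ₂(f₁−f₃) + μ₂(f₂−f₁), then it automatically satisfies the third equation W'·w₃ = λ₃(f₂−f₁) + μ₃(f₃−f₂); i.e., the third equation of the system is dependent on the first two. -/
noncomputable section

/-- Dot product on ℝ². -/
def dot2 (a b : Fin 2 → ℝ) : ℝ := a 0 * b 0 + a 1 * b 1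

/-- Determinant of two vectors in ℝ². -/
def det2 (a b : Fin 2 → ℝ) : ℝ := a 0 * b 1 - a 1 * b 0

/-- If `W'` satisfies the first two equations of the DEC anisotropic flux system,
then it automatically satisfies the third: the third equation depends on the
first two. -/
theorem dec_anisotropic_flux_third_equation_dependent
    (v₁ v₂ v₃ : Fin 2 → ℝ)
    (w₁ w₂ w₃ : Fin 2 → ℝ)
    (hw₁ : w₁ = v₂ - v₁) (hw₂ : w₂ = v₃ - v₂) (hw₃ : w₃ = v₁ - v₃)
    (hA : det2 (v₂ - v₁) (v₃ - v₁) ≠ 0)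
    (K : Matrix (Fin 2) (Fin 2) ℝ)
    (l₁ m₁ l₂ m₂ l₃ m₃ : ℝ)
    (h₁ : K.mulVec w₁ = l₁ • w₂ + m₁ • w₃)
    (h₂ : K.mulVec w₂ = l₂ • w₃ + m₂ • w₁)
    (h₃ : K.mulVec w₃ = l₃ • w₁ + m₃ • w₂)
    (f₁ f₂ f₃ : ℝ) (W' : Fin 2 → ℝ)
    (hW₁ : dot2 W' w₁ = l₁ * (f₃ - f₂) + m₁ * (f₁ - f₃))
    (hW₂ : dot2 W' w₂ = l₂ * (f₁ - f₃) + m₂ * (f₂ - f₁)) :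
    dot2 W' w₃ = l₃ * (f₂ - f₁) + m₃ * (f₃ - f₂) := by
  have hsum : w₁ + w₂ + w₃ = 0 := by
    subst hw₁ hw₂ hw₃; funext i; simp
  have hK : l₁ • w₂ + m₁ • w₃ + (l₂ • w₃ + m₂ • w₁) + (l₃ • w₁ + m₃ • w₂) = 0 := by
    rw [← h₁, ← h₂, ← h₃, ← Matrix.mulVec_add, ← Matrix.mulVec_add, hsum,
      Matrix.mulVec_zero]
  have e0 := congrFun hK 0
  have e1 := congrFun hK 1
  have s0 := congrFun hsum 0
  have s1 := congrFun hsum 1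
  simp [Pi.add_apply, Pi.smul_apply, smul_eq_mul] at e0 e1 s0 s1
  -- abbreviations
  set a0 := w₁ 0; set a1 := w₁ 1; set b0 := w₂ 0; set b1 := w₂ 1
  have hc0 : w₃ 0 = -(a0 + b0) := by linarith
  have hc1 : w₃ 1 = -(a1 + b1) := by linarith
  have hdet : a0 * b1 - a1 * b0 ≠ 0 := by
    have : det2 (v₂ - v₁) (v₃ - v₁) = a0 * b1 - a1 * b0 := by
      simp only [a0, a1, b0, b1, hw₁, hw₂, det2, Pi.sub_apply]; ring
    rwa [this] at hA
  rw [hc0] at e0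
  rw [hc1] at e1
  have hα : l₃ - (m₁ + l₂ - m₂) = 0 := by
    rcases mul_eq_zero.mp (show (l₃ - (m₁ + l₂ - m₂)) * (a0 * b1 - a1 * b0) = 0 by
      linear_combination b1 * e0 - b0 * e1) with h | h
    · exact h
    · exact absurd h hdet
  have hβ : m₃ - (m₁ + l₂ - l₁) = 0 := by
    rcases mul_eq_zero.mp (show (m₃ - (m₁ + l₂ - l₁)) * (a0 * b1 - a1 * b0) = 0 by
      linear_combination a0 * e1 - a1 * e0) with h | h
    · exact h
    · exact absurd h hdet
  have hl₃ : l₃ = m₁ + l₂ - m₂ := by linarith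
  have hm₃ : m₃ = m₁ + l₂ - l₁ := by linarith
  have : dot2 W' w₃ = -(dot2 W' w₁ + dot2 W' w₂) := by
    simp only [dot2, hc0, hc1]; ring
  rw [this, hW₁, hW₂, hl₃, hm₃]; ring
end
end

section
/- Let W be the unique discrete gradient, i.e. the vector with W·w₁ = f₂−f₁ and W·(v₃−v₁) = f₃−f₁. Then W' := K·W is the unique vector in ℝ² satisfying the DEC anisotropic flux system W'·w₁ = λ₁(f₃−f₂) + μ₁(f₁−f₃), W'·w₂ = λ₂(f₁−f₃) + μ₂(f₂−f₁), W'·w₃ = λ₃(f₂−f₁) + μ₃(f₃−f₂); i.e., the discrete anisotropic flux is the image under K of the discrete isotropic flux. -/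
noncomputable section

/-- If `W` is the DEC discrete gradient, then `W' := K·W` is the unique vector
satisfying the DEC anisotropic flux system: the discrete anisotropic flux is the
image under `K` of the discrete isotropic flux. -/
theorem dec_anisotropic_flux_is_K_of_isotropic_flux
    (v₁ v₂ v₃ : Fin 2 → ℝ)
    (w₁ w₂ w₃ : Fin 2 → ℝ)
    (hw₁ : w₁ = v₂ - v₁) (hw₂ : w₂ = v₃ - v₂) (hw₃ : w₃ = v₁ - v₃)
    (hA : det2 (v₂ - v₁) (v₃ - v₁) ≠ 0)
    (K : Matrix (Fin 2) (Fin 2) ℝ) (hK : K.IsSymm)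
    (l₁ m₁ l₂ m₂ l₃ m₃ : ℝ)
    (h₁ : K.mulVec w₁ = l₁ • w₂ + m₁ • w₃)
    (h₂ : K.mulVec w₂ = l₂ • w₃ + m₂ • w₁)
    (h₃ : K.mulVec w₃ = l₃ • w₁ + m₃ • w₂)
    (f₁ f₂ f₃ : ℝ) (W : Fin 2 → ℝ)
    (hW₁ : dot2 W w₁ = f₂ - f₁) (hW₂ : dot2 W (v₃ - v₁) = f₃ - f₁) :
    (dot2 (K.mulVec W) w₁ = l₁ * (f₃ - f₂) + m₁ * (f₁ - f₃) ∧
     dot2 (K.mulVec W) w₂ = l₂ * (f₁ - f₃) + m₂ * (f₂ - f₁) ∧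
     dot2 (K.mulVec W) w₃ = l₃ * (f₂ - f₁) + m₃ * (f₃ - f₂)) ∧
    ∀ W' : Fin 2 → ℝ,
      dot2 W' w₁ = l₁ * (f₃ - f₂) + m₁ * (f₁ - f₃) →
      dot2 W' w₂ = l₂ * (f₁ - f₃) + m₂ * (f₂ - f₁) →
      dot2 W' w₃ = l₃ * (f₂ - f₁) + m₃ * (f₃ - f₂) →
      W' = K.mulVec W := by
  have hKs : K 1 0 = K 0 1 := by
    have := congrFun (congrFun hK 0) 1
    simpa [Matrix.transpose_apply] using this
  have e10 := congrFun h₁ 0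
  have e11 := congrFun h₁ 1
  have e20 := congrFun h₂ 0
  have e21 := congrFun h₂ 1
  have e30 := congrFun h₃ 0
  have e31 := congrFun h₃ 1
  simp [Matrix.mulVec, dotProduct, Fin.sum_univ_two, Pi.add_apply, Pi.smul_apply,
    smul_eq_mul] at e10 e11 e20 e21 e30 e31
  subst hw₁ hw₂ hw₃
  simp [dot2, Pi.sub_apply] at hW₁ hW₂ ⊢
  simp [det2, Pi.sub_apply] at hA
  simp only [Pi.sub_apply] at e10 e11 e20 e21 e30 e31
  have key : ∀ i : Fin 2, K.mulVec W i = K 0 i * W 0 + K 1 i * W 1 := by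
    intro i
    fin_cases i <;>
      simp [Matrix.mulVec, dotProduct, Fin.sum_univ_two, hKs]
  constructor
  · refine ⟨?_, ?_, ?_⟩ <;> simp only [hKs] at e11 e21 e31 ⊢
    · linear_combination (W 0) * e10 + (W 1) * e11 + l₁ * hW₂ - l₁ * hW₁ - m₁ * hW₂
    · linear_combination (W 0) * e20 + (W 1) * e21 - l₂ * hW₂ + m₂ * hW₁
    · linear_combination (W 0) * e30 + (W 1) * e31 + l₃ * hW₁ + m₃ * hW₂ - m₃ * hW₁
  · intro W' g1 g2 g3
    have c1 : (W' 0 - K.mulVec W 0) * (v₂ 0 - v₁ 0) + (W' 1 - K.mulVec W 1) * (v₂ 1 - v₁ 1) = 0 := by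
      simp only [key]
      linear_combination g1 - (W 0) * e10 - (W 1) * e11 - l₁ * hW₂ + l₁ * hW₁ + m₁ * hW₂
    have c2 : (W' 0 - K.mulVec W 0) * (v₃ 0 - v₂ 0) + (W' 1 - K.mulVec W 1) * (v₃ 1 - v₂ 1) = 0 := by
      simp only [key]
      linear_combination g2 - (W 0) * e20 - (W 1) * e21 + l₂ * hW₂ - m₂ * hW₁
    have d0 : (W' 0 - K.mulVec W 0) * ((v₂ 0 - v₁ 0) * (v₃ 1 - v₁ 1) - (v₂ 1 - v₁ 1) * (v₃ 0 - v₁ 0)) = 0 := by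
      linear_combination (v₃ 1 - v₂ 1) * c1 - (v₂ 1 - v₁ 1) * c2
    have d1 : (W' 1 - K.mulVec W 1) * ((v₂ 0 - v₁ 0) * (v₃ 1 - v₁ 1) - (v₂ 1 - v₁ 1) * (v₃ 0 - v₁ 0)) = 0 := by
      linear_combination (v₂ 0 - v₁ 0) * c2 - (v₃ 0 - v₂ 0) * c1
    have hA' : (v₂ 0 - v₁ 0) * (v₃ 1 - v₁ 1) - (v₂ 1 - v₁ 1) * (v₃ 0 - v₁ 0) ≠ 0 := by
      intro h; exact hA (by linarith)
    funext i
    fin_cases i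
    · have := (mul_eq_zero.mp d0).resolve_right hA'
      simpa using sub_eq_zero.mp this
    · have := (mul_eq_zero.mp d1).resolve_right hA'
      simpa using sub_eq_zero.mp this
end
end

section
/- Let W be the unique vector with W·(v₂−v₁) = f₂−f₁ and W·(v₃−v₁) = f₃−f₁, and set W' := K·W. Then the primal 1-form obtained from W' by dotting with the triangle's edges equals the matrix product K^DEC · D₀ · (f₁,f₂,f₃)ᵀ; that is, (W'·w₁, W'·w₂, W'·w₃)ᵀ = K^DEC D₀ (f₁,f₂,f₃)ᵀ, where D₀ is the 3×3 matrix with rows (−1,1,0), (0,−1,1), (1,0,−1) and K^DEC is the 3×3 matrix with rows (0, λ₁, μ₁), (μ₂, 0, λ₂), (λ₃, μ₃, 0). -/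
noncomputable section

lemma dot2_symm_adj (K : Matrix (Fin 2) (Fin 2) ℝ) (hK : K.IsSymm)
    (x y : Fin 2 → ℝ) : dot2 (K.mulVec x) y = dot2 x (K.mulVec y) := by
  have h01 : K 1 0 = K 0 1 := by
    have := congrFun (congrFun hK 0) 1
    simpa [Matrix.transpose_apply] using this
  simp [dot2, Matrix.mulVec, dotProduct, Fin.sum_univ_two, h01]
  ring

lemma dot2_add_right (x a b : Fin 2 → ℝ) :
    dot2 x (a + b) = dot2 x a + dot2 x b := by
  simp [dot2]; ring

lemma dot2_smul_right (c : ℝ) (x a : Fin 2 → ℝ) :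
    dot2 x (c • a) = c * dot2 x a := by
  simp [dot2]; ring

/-- The primal 1-form obtained from the anisotropic flux `W' = K·W` by dotting
with the triangle's edges equals `K^DEC · D₀ · (f₁,f₂,f₃)ᵀ`. -/
theorem dec_anisotropy_on_primal_one_forms
    (v₁ v₂ v₃ : Fin 2 → ℝ)
    (w₁ w₂ w₃ : Fin 2 → ℝ)
    (hw₁ : w₁ = v₂ - v₁) (hw₂ : w₂ = v₃ - v₂) (hw₃ : w₃ = v₁ - v₃)
    (hA : det2 (v₂ - v₁) (v₃ - v₁) ≠ 0)
    (K : Matrix (Fin 2) (Fin 2) ℝ) (hK : K.IsSymm)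
    (l₁ m₁ l₂ m₂ l₃ m₃ : ℝ)
    (h₁ : K.mulVec w₁ = l₁ • w₂ + m₁ • w₃)
    (h₂ : K.mulVec w₂ = l₂ • w₃ + m₂ • w₁)
    (h₃ : K.mulVec w₃ = l₃ • w₁ + m₃ • w₂)
    (f₁ f₂ f₃ : ℝ) (W : Fin 2 → ℝ)
    (hW₁ : dot2 W (v₂ - v₁) = f₂ - f₁) (hW₂ : dot2 W (v₃ - v₁) = f₃ - f₁)
    (D₀ : Matrix (Fin 3) (Fin 3) ℝ)
    (hD₀ : D₀ = !![-1, 1, 0; 0, -1, 1; 1, 0, -1])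
    (KDEC : Matrix (Fin 3) (Fin 3) ℝ)
    (hKDEC : KDEC = !![0, l₁, m₁; m₂, 0, l₂; l₃, m₃, 0]) :
    ![dot2 (K.mulVec W) w₁, dot2 (K.mulVec W) w₂, dot2 (K.mulVec W) w₃] =
      (KDEC * D₀).mulVec ![f₁, f₂, f₃] := by
  have e1 : dot2 W w₁ = f₂ - f₁ := by rw [hw₁]; exact hW₁
  have e2 : dot2 W w₂ = f₃ - f₂ := by
    rw [hw₂]
    have : (v₃ - v₂ : Fin 2 → ℝ) = (v₃ - v₁) - (v₂ - v₁) := by abel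
    rw [this]
    have hs : dot2 W ((v₃ - v₁) - (v₂ - v₁)) = dot2 W (v₃ - v₁) - dot2 W (v₂ - v₁) := by
      simp [dot2]; ring
    rw [hs, hW₁, hW₂]; ring
  have e3 : dot2 W w₃ = f₁ - f₃ := by
    rw [hw₃]
    have : (v₁ - v₃ : Fin 2 → ℝ) = -(v₃ - v₁) := by abel
    rw [this]
    have hs : dot2 W (-(v₃ - v₁)) = -dot2 W (v₃ - v₁) := by simp [dot2]; ring
    rw [hs, hW₂]; ring
  have g1 : dot2 (K.mulVec W) w₁ = l₁ * (f₃ - f₂) + m₁ * (f₁ - f₃) := by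
    rw [dot2_symm_adj K hK, h₁, dot2_add_right, dot2_smul_right, dot2_smul_right, e2, e3]
  have g2 : dot2 (K.mulVec W) w₂ = l₂ * (f₁ - f₃) + m₂ * (f₂ - f₁) := by
    rw [dot2_symm_adj K hK, h₂, dot2_add_right, dot2_smul_right, dot2_smul_right, e3, e1]
  have g3 : dot2 (K.mulVec W) w₃ = l₃ * (f₂ - f₁) + m₃ * (f₃ - f₂) := by
    rw [dot2_symm_adj K hK, h₃, dot2_add_right, dot2_smul_right, dot2_smul_right, e1, e2]
  rw [g1, g2, g3]
  funext i
  fin_cases i <;>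
    simp [g1, g2, g3, hD₀, hKDEC, Matrix.mulVec, dotProduct,
      Matrix.mul_apply, Fin.sum_univ_three] <;> ring
end
end
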